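/- arXiv:1602.06121 — 2 statements merged into one kernel-verified Lean document; each statement's English description precedes it below -/
import Mathlib

section
/- With the map φ as above, the gradient of the coordinate s₁ (as a function of the Cartesian point x = φ(s)) equals (1/(1 - ε κ s₃ R cos s₂)) T(s₁), provided 1 - ε κ s₃ R cos s₂ ≠ 0. -/
open scoped RealInnerProductSpace

/-- The gradient of the coordinate `s₁` of the inverse of `φ`, namely the vector
`G = (1/(1 - ε κ s₃ R cos s₂)) T(s₁)`, is characterized by the relations
`⟪G, ∂φ/∂s₁⟫ = 1`, `⟪G, ∂φ/∂s₂⟫ = 0`, `⟪G, ∂φ/∂s₃⟫ = 0` (the first row of the inverse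
Jacobian `(∇ₛφ)⁻¹` in the Frenet basis), provided `1 - ε κ s₃ R cos s₂ ≠ 0`. -/
theorem stmt_2
    (c T N B : ℝ → EuclideanSpace ℝ (Fin 3)) (κ τ : ℝ → ℝ)
    (R : ℝ → ℝ → ℝ) (Rs : ℝ → ℝ) (ε t s₁ s₂ s₃ : ℝ)
    (hc : ∀ s, HasDerivAt c (T s) s)
    (hT : ∀ s, HasDerivAt T (κ s • N s) s)
    (hN : ∀ s, HasDerivAt N ((-κ s) • T s + τ s • B s) s)
    (hB : ∀ s, HasDerivAt B ((-τ s) • N s) s)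
    (hTT : ∀ s, ⟪T s, T s⟫ = 1) (hNN : ∀ s, ⟪N s, N s⟫ = 1)
    (hBB : ∀ s, ⟪B s, B s⟫ = 1) (hTN : ∀ s, ⟪T s, N s⟫ = 0)
    (hTB : ∀ s, ⟪T s, B s⟫ = 0) (hNB : ∀ s, ⟪N s, B s⟫ = 0)
    (hRpos : ∀ s, 0 < R t s)
    (hR : ∀ s, HasDerivAt (fun s' => R t s') (Rs s) s)
    (D : Fin 3 → EuclideanSpace ℝ (Fin 3))
    (hD1 : HasDerivAt
      (fun s => c s + (ε * s₃ * R t s) • ((Real.cos s₂) • N s + (Real.sin s₂) • B s))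
      (D 0) s₁)
    (hD2 : HasDerivAt
      (fun θ => c s₁ + (ε * s₃ * R t s₁) • ((Real.cos θ) • N s₁ + (Real.sin θ) • B s₁))
      (D 1) s₂)
    (hD3 : HasDerivAt
      (fun r => c s₁ + (ε * r * R t s₁) • ((Real.cos s₂) • N s₁ + (Real.sin s₂) • B s₁))
      (D 2) s₃)
    (hA : 1 - ε * κ s₁ * s₃ * R t s₁ * Real.cos s₂ ≠ 0) :
    ⟪(1 / (1 - ε * κ s₁ * s₃ * R t s₁ * Real.cos s₂)) • T s₁, D 0⟫ = 1 ∧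
    ⟪(1 / (1 - ε * κ s₁ * s₃ * R t s₁ * Real.cos s₂)) • T s₁, D 1⟫ = 0 ∧
    ⟪(1 / (1 - ε * κ s₁ * s₃ * R t s₁ * Real.cos s₂)) • T s₁, D 2⟫ = 0 := by
  -- Compute D 0
  have hscal : HasDerivAt (fun s => ε * s₃ * R t s) ((ε * s₃) * Rs s₁) s₁ :=
    (hR s₁).const_mul (ε * s₃)
  have hvec : HasDerivAt (fun s => (Real.cos s₂) • N s + (Real.sin s₂) • B s)
      ((Real.cos s₂) • ((-κ s₁) • T s₁ + τ s₁ • B s₁) + (Real.sin s₂) • ((-τ s₁) • N s₁)) s₁ :=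
    ((hN s₁).const_smul (Real.cos s₂)).add ((hB s₁).const_smul (Real.sin s₂))
  have h0 : HasDerivAt
      (fun s => c s + (ε * s₃ * R t s) • ((Real.cos s₂) • N s + (Real.sin s₂) • B s))
      (T s₁ + ((ε * s₃ * R t s₁) • ((Real.cos s₂) • ((-κ s₁) • T s₁ + τ s₁ • B s₁)
            + (Real.sin s₂) • ((-τ s₁) • N s₁))
        + ((ε * s₃) * Rs s₁) • ((Real.cos s₂) • N s₁ + (Real.sin s₂) • B s₁))) s₁ :=
    (hc s₁).add (hscal.smul hvec)
  have e0 := hD1.unique h0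
  -- Compute D 1
  have h1 : HasDerivAt
      (fun θ => c s₁ + (ε * s₃ * R t s₁) • ((Real.cos θ) • N s₁ + (Real.sin θ) • B s₁))
      ((ε * s₃ * R t s₁) • ((-Real.sin s₂) • N s₁ + (Real.cos s₂) • B s₁)) s₂ := by
    have := (((Real.hasDerivAt_cos s₂).smul_const (N s₁)).add
      ((Real.hasDerivAt_sin s₂).smul_const (B s₁))).const_smul (ε * s₃ * R t s₁)
    simpa using this.const_add (c s₁)
  have e1 := hD2.unique h1
  -- Compute D 2
  have hr : HasDerivAt (fun r => ε * r * R t s₁) (ε * R t s₁) s₃ := by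
    simpa using ((hasDerivAt_id s₃).const_mul ε).mul_const (R t s₁)
  have h2 : HasDerivAt
      (fun r => c s₁ + (ε * r * R t s₁) • ((Real.cos s₂) • N s₁ + (Real.sin s₂) • B s₁))
      ((ε * R t s₁) • ((Real.cos s₂) • N s₁ + (Real.sin s₂) • B s₁)) s₃ := by
    simpa using (hr.smul_const ((Real.cos s₂) • N s₁ + (Real.sin s₂) • B s₁)).const_add (c s₁)
  have e2 := hD3.unique h2
  rw [e0, e1, e2]
  simp only [inner_add_left, inner_add_right, inner_smul_left, inner_smul_right,
    RCLike.conj_to_real, hTT, hTN, hTB, hNN, hNB, hBB,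
    real_inner_comm (N s₁) (T s₁), real_inner_comm (B s₁) (T s₁),
    real_inner_comm (B s₁) (N s₁)]
  refine ⟨?_, by ring, by ring⟩
  field_simp
  ring
end

section
/- With the map φ as above, the gradient of s₂ with respect to x equals -(τ/(1 - ε κ s₃ R cos s₂)) T - (sin s₂/(ε s₃ R)) N + (cos s₂/(ε s₃ R)) B, and the gradient of s₃ equals -(s₃ ∂R/∂s₁ /(R(1 - ε κ s₃ R cos s₂))) T + (cos s₂/(ε R)) N + (sin s₂/(ε R)) B. -/
set_option maxHeartbeats 1000000


open scoped RealInnerProductSpace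

/-- The gradients of the coordinates `s₂` and `s₃` of the inverse of `φ` are
`G₂ = -(τ/(1-εκs₃R cos s₂)) T - (sin s₂/(ε s₃ R)) N + (cos s₂/(ε s₃ R)) B` and
`G₃ = -(s₃ ∂R/∂s₁/(R(1-εκs₃R cos s₂))) T + (cos s₂/(ε R)) N + (sin s₂/(ε R)) B`,
characterized as the corresponding rows of the inverse Jacobian `(∇ₛφ)⁻¹`
via `⟪G_q, ∂φ/∂s_j⟫ = δ_{qj}`. -/
theorem stmt_3
    (c T N B : ℝ → EuclideanSpace ℝ (Fin 3)) (κ τ : ℝ → ℝ)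
    (R : ℝ → ℝ → ℝ) (Rs : ℝ → ℝ) (ε t s₁ s₂ s₃ : ℝ)
    (hc : ∀ s, HasDerivAt c (T s) s)
    (hT : ∀ s, HasDerivAt T (κ s • N s) s)
    (hN : ∀ s, HasDerivAt N ((-κ s) • T s + τ s • B s) s)
    (hB : ∀ s, HasDerivAt B ((-τ s) • N s) s)
    (hTT : ∀ s, ⟪T s, T s⟫ = 1) (hNN : ∀ s, ⟪N s, N s⟫ = 1)
    (hBB : ∀ s, ⟪B s, B s⟫ = 1) (hTN : ∀ s, ⟪T s, N s⟫ = 0)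
    (hTB : ∀ s, ⟪T s, B s⟫ = 0) (hNB : ∀ s, ⟪N s, B s⟫ = 0)
    (hRpos : ∀ s, 0 < R t s)
    (hR : ∀ s, HasDerivAt (fun s' => R t s') (Rs s) s)
    (D : Fin 3 → EuclideanSpace ℝ (Fin 3))
    (hD1 : HasDerivAt
      (fun s => c s + (ε * s₃ * R t s) • ((Real.cos s₂) • N s + (Real.sin s₂) • B s))
      (D 0) s₁)
    (hD2 : HasDerivAt
      (fun θ => c s₁ + (ε * s₃ * R t s₁) • ((Real.cos θ) • N s₁ + (Real.sin θ) • B s₁))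
      (D 1) s₂)
    (hD3 : HasDerivAt
      (fun r => c s₁ + (ε * r * R t s₁) • ((Real.cos s₂) • N s₁ + (Real.sin s₂) • B s₁))
      (D 2) s₃)
    (hs₃ : 0 < s₃) (hs₃' : s₃ ≤ 1) (hε : ε ≠ 0)
    (hA : 1 - ε * κ s₁ * s₃ * R t s₁ * Real.cos s₂ ≠ 0)
    (G₂ G₃ : EuclideanSpace ℝ (Fin 3))
    (hG₂ : G₂ = (-(τ s₁) / (1 - ε * κ s₁ * s₃ * R t s₁ * Real.cos s₂)) • T s₁
        + (-(Real.sin s₂) / (ε * s₃ * R t s₁)) • N s₁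
        + (Real.cos s₂ / (ε * s₃ * R t s₁)) • B s₁)
    (hG₃ : G₃ = (-(s₃ * Rs s₁) / (R t s₁ * (1 - ε * κ s₁ * s₃ * R t s₁ * Real.cos s₂))) • T s₁
        + (Real.cos s₂ / (ε * R t s₁)) • N s₁
        + (Real.sin s₂ / (ε * R t s₁)) • B s₁) :
    (⟪G₂, D 0⟫ = 0 ∧ ⟪G₂, D 1⟫ = 1 ∧ ⟪G₂, D 2⟫ = 0) ∧
    (⟪G₃, D 0⟫ = 0 ∧ ⟪G₃, D 1⟫ = 0 ∧ ⟪G₃, D 2⟫ = 1) := by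

  have hNT : ∀ s, ⟪N s, T s⟫ = 0 := fun s => by rw [real_inner_comm]; exact hTN s
  have hBT : ∀ s, ⟪B s, T s⟫ = 0 := fun s => by rw [real_inner_comm]; exact hTB s
  have hBN : ∀ s, ⟪B s, N s⟫ = 0 := fun s => by rw [real_inner_comm]; exact hNB s
  -- compute D 0
  have hg : HasDerivAt (fun s => (Real.cos s₂) • N s + (Real.sin s₂) • B s)
      ((Real.cos s₂) • ((-κ s₁) • T s₁ + τ s₁ • B s₁) + (Real.sin s₂) • ((-τ s₁) • N s₁)) s₁ :=
    ((hN s₁).const_smul (Real.cos s₂)).add ((hB s₁).const_smul (Real.sin s₂))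
  have hf : HasDerivAt (fun s => ε * s₃ * R t s) (ε * s₃ * Rs s₁) s₁ := (hR s₁).const_mul _
  have hD1' := (hc s₁).add (hf.smul hg)
  have e0 : D 0 = T s₁ + ((ε * s₃ * R t s₁) • ((Real.cos s₂) • ((-κ s₁) • T s₁ + τ s₁ • B s₁)
      + (Real.sin s₂) • ((-τ s₁) • N s₁))
      + (ε * s₃ * Rs s₁) • ((Real.cos s₂) • N s₁ + (Real.sin s₂) • B s₁)) :=
    hD1.unique hD1'
  -- compute D 1
  have hcos := Real.hasDerivAt_cos s₂
  have hsin := Real.hasDerivAt_sin s₂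
  have hD2' := (hasDerivAt_const s₂ (c s₁)).add
    (((hcos.smul_const (N s₁)).add (hsin.smul_const (B s₁))).const_smul (ε * s₃ * R t s₁))
  have e1 : D 1 = (ε * s₃ * R t s₁) • ((-Real.sin s₂) • N s₁ + (Real.cos s₂) • B s₁) :=
    by simpa using hD2.unique hD2'
  -- compute D 2
  have hr : HasDerivAt (fun r : ℝ => ε * r * R t s₁) (ε * R t s₁) s₃ := by
    simpa using ((hasDerivAt_id s₃).const_mul ε).mul_const (R t s₁)
  have hD3' := (hasDerivAt_const s₃ (c s₁)).add
    (hr.smul_const ((Real.cos s₂) • N s₁ + (Real.sin s₂) • B s₁))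
  have e2 : D 2 = (ε * R t s₁) • ((Real.cos s₂) • N s₁ + (Real.sin s₂) • B s₁) :=
    by simpa using hD3.unique hD3'
  have hRne : R t s₁ ≠ 0 := (hRpos s₁).ne'
  have hs₃ne : s₃ ≠ 0 := hs₃.ne'
  have hpyth : Real.sin s₂ ^ 2 + Real.cos s₂ ^ 2 = 1 := Real.sin_sq_add_cos_sq s₂
  refine ⟨⟨?_, ?_, ?_⟩, ⟨?_, ?_, ?_⟩⟩ <;>
    simp only [hG₂, hG₃, e0, e1, e2, inner_add_left, inner_add_right,
      real_inner_smul_left, real_inner_smul_right, hTT, hNN, hBB, hTN, hTB, hNB,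
      hNT, hBT, hBN] <;>
    field_simp <;>
    ring_nf <;>
    first
      | linarith [hpyth]
      | (have hA' : 1 - s₃ * ε * Real.cos s₂ * R t s₁ * κ s₁ ≠ 0 := fun h => hA (by linarith [h])
         have hy := mul_inv_cancel₀ hA'
         linear_combination (-(s₃ * Rs s₁ * ε)) * hy + (s₃ * Rs s₁ * ε) * hpyth)
      | (rw [show Real.sin s₂ ^ 2 = 1 - Real.cos s₂ ^ 2 by linarith [hpyth]]; ring)
end
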